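/- (Shift invariance of the Lagrange system) Let A be a pairwise reciprocal matrix of size n ≥ 1 and let r ∈ ℝ. Then the system (Ḡ + r·J).mulVec w + λ • 1 = 0, ∑ᵢ w i = 1 has a unique solution (w, λ), and its w-component is independent of r: w = w* = (1/c) • (G⁻¹.mulVec 1) with c = ∑ᵢ ∑ⱼ (G⁻¹) i j, while λ = (1 − 1/c) − r; only the Lagrange multiplier changes with the shift r. -/

import Mathlib

open Matrix BigOperators

/-- A pairwise reciprocal matrix (PRM): all entries positive and `A i j * A j i = 1`. -/
def IsPRM {n : ℕ} (A : Matrix (Fin n) (Fin n) ℝ) : Prop :=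
  ∀ i j, 0 < A i j ∧ A i j * A j i = 1

/-- The matrix `Ḡ` with diagonal `(n-1) + ∑_{k ≠ i} (A k i)^2` and
off-diagonal `-(A i j + A j i)`. -/
noncomputable def Gbar {n : ℕ} (A : Matrix (Fin n) (Fin n) ℝ) :
    Matrix (Fin n) (Fin n) ℝ :=
  Matrix.of fun i j =>
    if i = j then ((n : ℝ) - 1) + ∑ k ∈ Finset.univ.filter (fun k => k ≠ i), (A k i) ^ 2
    else -(A i j + A j i)

/-- The all-ones matrix `J`. -/
noncomputable def Jmat (n : ℕ) : Matrix (Fin n) (Fin n) ℝ :=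
  Matrix.of fun _ _ => 1

/-- `G = Ḡ + J`. -/
noncomputable def Gmat {n : ℕ} (A : Matrix (Fin n) (Fin n) ℝ) :
    Matrix (Fin n) (Fin n) ℝ :=
  Gbar A + Jmat n

/-- The weighted least squares objective `f(w) = ∑ i ∑ j (w i - A i j * w j)^2`. -/
noncomputable def wls {n : ℕ} (A : Matrix (Fin n) (Fin n) ℝ) (w : Fin n → ℝ) : ℝ :=
  ∑ i, ∑ j, (w i - A i j * w j) ^ 2
lemma prm_diag {n : ℕ} {A : Matrix (Fin n) (Fin n) ℝ} (hA : IsPRM A) (i : Fin n) :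
    A i i = 1 := by
  have h := hA i i
  nlinarith [h.1, h.2]

lemma quad_form {n : ℕ} {A : Matrix (Fin n) (Fin n) ℝ} (hA : IsPRM A) (x : Fin n → ℝ) :
    x ⬝ᵥ (Gbar A) *ᵥ x = ∑ i, ∑ j, (x i - A i j * x j) ^ 2 := by
  have hAii := prm_diag hA
  set T : Fin n → Fin n → ℝ :=
    fun i j => x i ^ 2 + (A j i) ^ 2 * x i ^ 2 - (A i j + A j i) * (x i * x j) with hT
  have key2 : ∑ i, ∑ j, (x i - A i j * x j) ^ 2 = ∑ i, ∑ j, T i j := by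
    have e1 : ∑ i, ∑ j, ((x i - A i j * x j) ^ 2 + (x j - A j i * x i) ^ 2)
        = ∑ i, ∑ j, (T i j + T j i) := by
      refine Finset.sum_congr rfl fun i _ => Finset.sum_congr rfl fun j _ => ?_
      simp only [hT]; ring
    have e2 : ∑ i, ∑ j, ((x i - A i j * x j) ^ 2 + (x j - A j i * x i) ^ 2)
        = (∑ i, ∑ j, (x i - A i j * x j) ^ 2) + (∑ i, ∑ j, (x i - A i j * x j) ^ 2) := by
      simp_rw [Finset.sum_add_distrib]
      congr 1
      exact Finset.sum_comm
    have e3 : ∑ i, ∑ j, (T i j + T j i)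
        = (∑ i, ∑ j, T i j) + (∑ i, ∑ j, T i j) := by
      simp_rw [Finset.sum_add_distrib]
      congr 1
      exact Finset.sum_comm
    rw [e2, e3] at e1
    linarith
  rw [key2]
  have hdot : x ⬝ᵥ (Gbar A) *ᵥ x = ∑ i, ∑ j, x i * (Gbar A i j * x j) := by
    simp [dotProduct, mulVec, Finset.mul_sum]
  rw [hdot]
  refine Finset.sum_congr rfl fun i _ => ?_
  set S : ℝ := ∑ k ∈ Finset.univ.filter (fun k => k ≠ i), (A k i) ^ 2 with hS
  have lhs_split : ∑ j, x i * (Gbar A i j * x j)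
      = ((n : ℝ) + 1 + S) * x i ^ 2 - ∑ j, (A i j + A j i) * (x i * x j) := by
    have h1 : ∀ j, x i * (Gbar A i j * x j)
        = (if i = j then ((n : ℝ) + 1 + S) * x i ^ 2 else 0)
          - (A i j + A j i) * (x i * x j) := by
      intro j
      by_cases h : i = j
      · subst h
        simp [Gbar, hAii i, hS]
        ring
      · simp [Gbar, h]
        ring
    simp_rw [h1, Finset.sum_sub_distrib, Finset.sum_ite_eq, Finset.mem_univ, if_true]
  have rhs_split : ∑ j, T i j
      = ((n : ℝ) + 1 + S) * x i ^ 2 - ∑ j, (A i j + A j i) * (x i * x j) := by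
    simp only [hT]
    rw [Finset.sum_sub_distrib]
    congr 1
    rw [Finset.sum_add_distrib, Finset.sum_const, Finset.card_univ, Fintype.card_fin]
    have h2 : ∑ j, (A j i) ^ 2 * x i ^ 2 = (∑ j, (A j i) ^ 2) * x i ^ 2 := by
      rw [Finset.sum_mul]
    have h3 : ∑ j, (A j i) ^ 2 = 1 + S := by
      rw [hS, Finset.filter_ne']
      rw [← Finset.add_sum_erase _ _ (Finset.mem_univ i), hAii i]
      norm_num
    rw [h2, h3]
    ring
  rw [lhs_split, rhs_split]

lemma jmat_mulVec {n : ℕ} (w : Fin n → ℝ) :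
    (Jmat n) *ᵥ w = (∑ i, w i) • (1 : Fin n → ℝ) := by
  funext i
  simp [Jmat, mulVec, dotProduct]

lemma gmat_posdef {n : ℕ} (hn : 1 ≤ n) {A : Matrix (Fin n) (Fin n) ℝ} (hA : IsPRM A) :
    (Gmat A).PosDef := by
  rw [posDef_iff_dotProduct_mulVec]
  constructor
  · -- Hermitian
    ext i j
    simp only [Gmat, Gbar, Jmat, conjTranspose_apply, Matrix.add_apply, of_apply, star_trivial]
    by_cases h : i = j
    · subst h; rfl
    · rw [if_neg h, if_neg (Ne.symm h)]
      ring
  · intro x hx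
    have hstar : star x = x := by
      funext i; simp
    rw [hstar]
    have hsplit : x ⬝ᵥ (Gmat A) *ᵥ x
        = (∑ i, ∑ j, (x i - A i j * x j) ^ 2) + (∑ i, x i) ^ 2 := by
      rw [Gmat, add_mulVec, dotProduct_add, quad_form hA]
      congr 1
      rw [jmat_mulVec, dotProduct_smul]
      simp [dotProduct]
      ring
    rw [hsplit]
    have hnn : (0:ℝ) ≤ ∑ i, ∑ j, (x i - A i j * x j) ^ 2 :=
      Finset.sum_nonneg fun i _ => Finset.sum_nonneg fun j _ => sq_nonneg _
    rcases eq_or_ne (∑ i, x i) 0 with hs | hs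
    · -- show the square sum is positive
      obtain ⟨k, hk⟩ := Function.ne_iff.mp hx
      rcases hnn.lt_or_eq with hpos | hzero
      · nlinarith [sq_nonneg (∑ i, x i)]
      · exfalso
        have hall : ∀ i j, x i = A i j * x j := by
          intro i j
          have h0 := (Finset.sum_eq_zero_iff_of_nonneg
            (fun i _ => Finset.sum_nonneg fun j _ => sq_nonneg (x i - A i j * x j))).1
            hzero.symm i (Finset.mem_univ i)
          have h1 := (Finset.sum_eq_zero_iff_of_nonneg
            (fun j _ => sq_nonneg (x i - A i j * x j))).1 h0 j (Finset.mem_univ j)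
          have := sq_eq_zero_iff.mp h1
          linarith
        have hsum : ∑ i, x i = (∑ i, A i k) * x k := by
          rw [Finset.sum_mul]
          exact Finset.sum_congr rfl fun i _ => hall i k
        have hposA : 0 < ∑ i, A i k := by
          haveI : Nonempty (Fin n) := Fin.pos_iff_nonempty.mp hn
          exact Finset.sum_pos (fun i _ => (hA i k).1) Finset.univ_nonempty
        rw [hsum] at hs
        rcases mul_eq_zero.mp hs with h | h
        · exact absurd h hposA.ne'
        · exact hk (by simpa using h)
    · have : 0 < (∑ i, x i) ^ 2 := by positivity
      linarith

/-- shift invariance of the Lagrange system: for every `r : ℝ`, the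
system `(Ḡ + r·J).mulVec w + λ • 1 = 0`, `∑ i, w i = 1` has a unique solution `(w, λ)`;
its `w`-component is `w*` independently of `r`, while `λ = (1 − 1/c) − r`. -/
theorem lagrangian_igm_shift_invariance {n : ℕ} (hn : 1 ≤ n)
    (A : Matrix (Fin n) (Fin n) ℝ) (hA : IsPRM A) (r : ℝ) :
    let c : ℝ := ∑ i, ∑ j, (Gmat A)⁻¹ i j
    let wstar : Fin n → ℝ := (1 / c) • ((Gmat A)⁻¹.mulVec 1)
    (∃! p : (Fin n → ℝ) × ℝ,
      (Gbar A + r • Jmat n).mulVec p.1 + p.2 • (1 : Fin n → ℝ) = 0 ∧ ∑ i, p.1 i = 1) ∧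
    (∀ p : (Fin n → ℝ) × ℝ,
      ((Gbar A + r • Jmat n).mulVec p.1 + p.2 • (1 : Fin n → ℝ) = 0 ∧ ∑ i, p.1 i = 1) →
        p.1 = wstar ∧ p.2 = (1 - 1 / c) - r) := by
  intro c wstar
  have hGpd := gmat_posdef hn hA
  have hUdet : IsUnit (Gmat A).det := hGpd.det_pos.ne'.isUnit
  have hGinv : Gmat A * (Gmat A)⁻¹ = 1 := mul_nonsing_inv _ hUdet
  have hinvG : (Gmat A)⁻¹ * Gmat A = 1 := nonsing_inv_mul _ hUdet
  set v : Fin n → ℝ := (Gmat A)⁻¹.mulVec 1 with hvdef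
  have hGv : (Gmat A) *ᵥ v = 1 := by
    rw [hvdef, mulVec_mulVec, hGinv, one_mulVec]
  have hNE : Nonempty (Fin n) := Fin.pos_iff_nonempty.mp hn
  have hone : (1 : Fin n → ℝ) ≠ 0 := by
    intro h
    obtain ⟨i⟩ := hNE
    have := congrFun h i
    simp at this
  have hc_eq : c = ∑ i, v i := by
    simp [c, hvdef, mulVec, dotProduct]
  have hcpos : 0 < c := by
    have h := hGpd.inv.dotProduct_mulVec_pos hone
    have hstar : star (1 : Fin n → ℝ) = 1 := by funext i; simp
    rw [hstar] at h
    calc (0:ℝ) < (1 : Fin n → ℝ) ⬝ᵥ (Gmat A)⁻¹ *ᵥ 1 := h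
      _ = c := by simp [hc_eq, hvdef, dotProduct]
  have hc0 : c ≠ 0 := hcpos.ne'
  have hsumv : ∑ i, v i = c := hc_eq.symm
  have hchar : ∀ (w : Fin n → ℝ) (l : ℝ),
      ((Gbar A + r • Jmat n) *ᵥ w + l • (1 : Fin n → ℝ) = 0 ∧ ∑ i, w i = 1) ↔
      (w = wstar ∧ l = (1 - 1 / c) - r) := by
    intro w l
    constructor
    · rintro ⟨heq, hsum⟩
      have hJw : (Jmat n) *ᵥ w = (1 : Fin n → ℝ) := by
        rw [jmat_mulVec, hsum, one_smul]
      have heq2 : (Gbar A) *ᵥ w + r • (1 : Fin n → ℝ) + l • (1 : Fin n → ℝ) = 0 := by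
        rw [add_mulVec, smul_mulVec, hJw] at heq
        exact heq
      have hGw : (Gmat A) *ᵥ w = (1 - r - l) • (1 : Fin n → ℝ) := by
        rw [Gmat, add_mulVec, jmat_mulVec, hsum, one_smul]
        funext i
        have := congrFun heq2 i
        simp only [Pi.add_apply, Pi.smul_apply, Pi.one_apply, Pi.zero_apply, smul_eq_mul] at this ⊢
        linarith
      have hw : w = (1 - r - l) • v := by
        have h1 : (Gmat A)⁻¹ *ᵥ ((Gmat A) *ᵥ w) = w := by
          rw [mulVec_mulVec, hinvG, one_mulVec]
        rw [hGw, mulVec_smul] at h1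
        exact h1.symm
      have hmu : (1 - r - l) * c = 1 := by
        have : ∑ i, w i = (1 - r - l) * ∑ i, v i := by
          rw [hw]
          simp [Finset.mul_sum]
        rw [hsum, hsumv] at this
        linarith
      have hmu' : 1 - r - l = 1 / c := by
        field_simp
        linarith
      constructor
      · rw [hw, hmu']
      · linarith [hmu']
    · rintro ⟨hw, hl⟩
      subst hw hl
      constructor
      · have hsumw : ∑ i, wstar i = 1 := by
          have : ∑ i, wstar i = (1/c) * ∑ i, v i := by
            simp [wstar, hvdef, Finset.mul_sum]
          rw [this, hsumv]
          field_simp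
        have hJw : (Jmat n) *ᵥ wstar = (1 : Fin n → ℝ) := by
          rw [jmat_mulVec, hsumw, one_smul]
        have hGmw : (Gmat A) *ᵥ wstar = (1/c) • (1 : Fin n → ℝ) := by
          show (Gmat A) *ᵥ ((1/c) • v) = _
          rw [mulVec_smul, hGv]
        have hGbw : (Gbar A) *ᵥ wstar = (1/c) • (1 : Fin n → ℝ) - (1 : Fin n → ℝ) := by
          have : (Gbar A) *ᵥ wstar + (Jmat n) *ᵥ wstar = (Gmat A) *ᵥ wstar := by
            rw [Gmat, add_mulVec]
          rw [hJw, hGmw] at this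
          funext i
          have := congrFun this i
          simp only [Pi.add_apply, Pi.smul_apply, Pi.sub_apply, Pi.one_apply,
            smul_eq_mul] at this ⊢
          linarith
        rw [add_mulVec, smul_mulVec, hJw, hGbw]
        funext i
        simp only [Pi.add_apply, Pi.sub_apply, Pi.smul_apply, Pi.one_apply, Pi.zero_apply,
          smul_eq_mul]
        ring
      · have : ∑ i, wstar i = (1/c) * ∑ i, v i := by
          simp [wstar, hvdef, Finset.mul_sum]
        rw [this, hsumv]
        field_simp
  constructor
  · refine ⟨(wstar, (1 - 1 / c) - r), (hchar _ _).2 ⟨rfl, rfl⟩, ?_⟩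
    rintro ⟨w, l⟩ hq
    obtain ⟨h1, h2⟩ := (hchar w l).1 hq
    simp [h1, h2]
  · intro p hp
    exact (hchar p.1 p.2).1 hp
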